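/- Let g = g₁ ⊕ ... ⊕ g_s be a direct sum decomposition of a semisimple Lie algebra over ℝ or ℂ into simple ideals, and let Λ be the operator (Λσ)(x,y,z,z') = σ([x,y],[z,z']) + σ([y,z],[x,z']) + σ([z,x],[y,z']) on symmetric bilinear forms. If σ is a symmetric bilinear form on g with Λσ = 0, then σ(g_i, g_j) = 0 for i ≠ j; consequently Ker Λ is the direct sum of the kernels of the analogous operators Λ_i on the summands g_i (extended trivially). -/

import Mathlib

/-- A simple ideal of a Lie algebra equals its own derived ideal. -/
lemma simple_ideal_derived_eq {𝕜 : Type*} [Field 𝕜] {L : Type*} [LieRing L] [LieAlgebra 𝕜 L]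
    (J : LieIdeal 𝕜 L) (h : LieAlgebra.IsSimple 𝕜 J) : ⁅J, J⁆ = J := by
  have hd : (⁅J, J⁆ : LieIdeal 𝕜 L) = LieAlgebra.derivedSeriesOfIdeal 𝕜 L 1 J := by
    simp [LieAlgebra.derivedSeriesOfIdeal_succ, LieAlgebra.derivedSeriesOfIdeal_zero]
  rcases h.eq_bot_or_eq_top (LieAlgebra.derivedSeries 𝕜 J 1) with hb | ht
  · exfalso
    apply h.non_abelian
    have : IsLieAbelian (⊤ : LieIdeal 𝕜 J) := by
      rw [LieAlgebra.abelian_iff_derived_one_eq_bot]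
      exact hb
    exact (lie_abelian_iff_equiv_lie_abelian LieIdeal.topEquiv).mp this
  · rw [hd, ← LieIdeal.derivedSeries_eq_derivedSeriesOfIdeal_map, ht,
      ← LieHom.idealRange_eq_map, LieIdeal.incl_idealRange]

theorem ker_lambda_direct_sum_decomposition
    {𝕜 : Type*} [RCLike 𝕜] {L : Type*} [LieRing L] [LieAlgebra 𝕜 L]
    [Module.Finite 𝕜 L] [LieAlgebra.IsSemisimple 𝕜 L]
    {s : ℕ} (I : Fin s → LieIdeal 𝕜 L)
    (hsimple : ∀ i, LieAlgebra.IsSimple 𝕜 (I i))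
    (hinternal : DirectSum.IsInternal fun i => ((I i : LieSubmodule 𝕜 L L) : Submodule 𝕜 L))
    (σ : L →ₗ[𝕜] L →ₗ[𝕜] 𝕜) (hσ : ∀ x y : L, σ x y = σ y x) :
    (∀ x y z w : L, σ ⁅x, y⁆ ⁅z, w⁆ + σ ⁅y, z⁆ ⁅x, w⁆ + σ ⁅z, x⁆ ⁅y, w⁆ = 0) ↔
      ((∀ i j, i ≠ j → ∀ x ∈ I i, ∀ y ∈ I j, σ x y = 0) ∧
       (∀ i, ∀ x ∈ I i, ∀ y ∈ I i, ∀ z ∈ I i, ∀ w ∈ I i,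
          σ ⁅x, y⁆ ⁅z, w⁆ + σ ⁅y, z⁆ ⁅x, w⁆ + σ ⁅z, x⁆ ⁅y, w⁆ = 0)) := by
  -- brackets between distinct simple ideals vanish
  have hdisj : ∀ i j, i ≠ j → ∀ a ∈ I i, ∀ b ∈ I j, ⁅a, b⁆ = (0 : L) := by
    intro i j hij a ha b hb
    have h1 : ⁅a, b⁆ ∈ I j := lie_mem_right 𝕜 L (I j) a b hb
    have h2 : ⁅a, b⁆ ∈ I i := lie_mem_left 𝕜 L (I i) a b ha
    have hd : Disjoint ((I i : LieSubmodule 𝕜 L L) : Submodule 𝕜 L)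
        ((I j : LieSubmodule 𝕜 L L) : Submodule 𝕜 L) :=
      hinternal.submodule_iSupIndep.pairwiseDisjoint hij
    exact Submodule.disjoint_def.mp hd _ h2 h1
  -- every element of a simple ideal lies in the span of brackets from that ideal
  have hspan : ∀ (k : Fin s), ∀ x ∈ I k,
      x ∈ Submodule.span 𝕜 {m : L | ∃ a ∈ I k, ∃ b ∈ I k, ⁅a, b⁆ = m} := by
    intro k x hx
    have h2 : (⁅I k, I k⁆ : LieIdeal 𝕜 L) = I k := simple_ideal_derived_eq (I k) (hsimple k)
    have h1 := LieSubmodule.lieIdeal_oper_eq_linear_span' (R := 𝕜) (L := L) (M := L)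
      (N := (I k : LieSubmodule 𝕜 L L)) (I := I k)
    rw [h2] at h1
    rw [← h1]
    exact hx
  constructor
  · intro h
    constructor
    · intro i j hij x hx y hy
      -- step 1: brackets from I i are σ-orthogonal to brackets involving I j
      have step1 : ∀ a ∈ I i, ∀ b ∈ I i, ∀ z ∈ I j, ∀ w : L, σ ⁅a, b⁆ ⁅z, w⁆ = 0 := by
        intro a ha b hb z hz w
        have := h a b z w
        rw [hdisj i j hij b hb z hz, hdisj j i hij.symm z hz a ha] at this
        simpa using this
      -- step 2: brackets from I i are σ-orthogonal to all of I j
      have step2 : ∀ a ∈ I i, ∀ b ∈ I i, σ ⁅a, b⁆ y = 0 := by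
        intro a ha b hb
        refine Submodule.span_induction (p := fun m _ => σ ⁅a, b⁆ m = 0) ?_ ?_ ?_ ?_ (hspan j y hy)
        · rintro m ⟨z, hz, w, hw, rfl⟩
          exact step1 a ha b hb z hz w
        · simp
        · intro u v _ _ hu hv; rw [map_add, hu, hv, add_zero]
        · intro c u _ hu; rw [map_smul, hu, smul_zero]
      -- step 3: all of I i is σ-orthogonal to y
      refine Submodule.span_induction (p := fun m _ => σ m y = 0) ?_ ?_ ?_ ?_ (hspan i x hx)
      · rintro m ⟨a, ha, b, hb, rfl⟩
        exact step2 a ha b hb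
      · simp
      · intro u v _ _ hu hv; rw [map_add, LinearMap.add_apply, hu, hv, add_zero]
      · intro c u _ hu; rw [map_smul, LinearMap.smul_apply, hu, smul_zero]
    · intro i x hx y hy z hz w hw
      exact h x y z w
  · rintro ⟨horth, hker⟩ x y z w
    have htop : (⨆ k, ((I k : LieSubmodule 𝕜 L L) : Submodule 𝕜 L)) = ⊤ :=
      hinternal.submodule_iSup_eq_top
    -- a single mixed bracket term vanishes unless all four indices coincide
    have key : ∀ (a b c d : L) (p q r t : Fin s), a ∈ I p → b ∈ I q → c ∈ I r → d ∈ I t →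
        ¬(p = q ∧ q = r ∧ r = t) → σ ⁅a, b⁆ ⁅c, d⁆ = 0 := by
      intro a b c d p q r t ha hb hc hd hne
      by_cases hpq : p = q
      · subst hpq
        by_cases hrt : r = t
        · subst hrt
          have hpr : p ≠ r := fun hpr => hne ⟨rfl, hpr, rfl⟩
          exact horth p r hpr _ (lie_mem_left 𝕜 L (I p) a b ha) _
            (lie_mem_left 𝕜 L (I r) c d hc)
        · rw [hdisj r t hrt c hc d hd, map_zero]
      · rw [hdisj p q hpq a ha b hb, map_zero, LinearMap.zero_apply]
    -- base case: all four elements in (possibly different) ideals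
    have key4 : ∀ (i : Fin s) (x : L), x ∈ I i → ∀ (j : Fin s) (y : L), y ∈ I j →
        ∀ (k : Fin s) (z : L), z ∈ I k → ∀ (l : Fin s) (w : L), w ∈ I l →
        σ ⁅x, y⁆ ⁅z, w⁆ + σ ⁅y, z⁆ ⁅x, w⁆ + σ ⁅z, x⁆ ⁅y, w⁆ = 0 := by
      intro i x hx j y hy k z hz l w hw
      by_cases hall : j = i ∧ k = i ∧ l = i
      · obtain ⟨rfl, rfl, rfl⟩ := hall
        exact hker _ x hx y hy z hz w hw
      · have h1 : σ ⁅x, y⁆ ⁅z, w⁆ = 0 := by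
          refine key x y z w i j k l hx hy hz hw ?_
          rintro ⟨rfl, rfl, rfl⟩; exact hall ⟨rfl, rfl, rfl⟩
        have h2 : σ ⁅y, z⁆ ⁅x, w⁆ = 0 := by
          refine key y z x w j k i l hy hz hx hw ?_
          rintro ⟨rfl, rfl, rfl⟩; exact hall ⟨rfl, rfl, rfl⟩
        have h3 : σ ⁅z, x⁆ ⁅y, w⁆ = 0 := by
          refine key z x y w k i j l hz hx hy hw ?_
          rintro ⟨rfl, rfl, rfl⟩; exact hall ⟨rfl, rfl, rfl⟩
        rw [h1, h2, h3]; ring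
    have hmem : ∀ v : L, v ∈ (⨆ k, ((I k : LieSubmodule 𝕜 L L) : Submodule 𝕜 L)) :=
      fun v => htop ▸ Submodule.mem_top
    -- peel off the variables one at a time
    have stepw : ∀ (i : Fin s) (x : L), x ∈ I i → ∀ (j : Fin s) (y : L), y ∈ I j →
        ∀ (k : Fin s) (z : L), z ∈ I k → ∀ w : L,
        w ∈ (⨆ l, ((I l : LieSubmodule 𝕜 L L) : Submodule 𝕜 L)) →
        σ ⁅x, y⁆ ⁅z, w⁆ + σ ⁅y, z⁆ ⁅x, w⁆ + σ ⁅z, x⁆ ⁅y, w⁆ = 0 := by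
      intro i x hx j y hy k z hz w hw
      refine Submodule.iSup_induction _ (motive := fun w =>
        σ ⁅x, y⁆ ⁅z, w⁆ + σ ⁅y, z⁆ ⁅x, w⁆ + σ ⁅z, x⁆ ⁅y, w⁆ = 0) hw ?_ ?_ ?_
      · intro l w hw; exact key4 i x hx j y hy k z hz l w hw
      · simp
      · intro u v hu hv
        simp only [lie_add, map_add]
        linear_combination hu + hv
    have stepz : ∀ (i : Fin s) (x : L), x ∈ I i → ∀ (j : Fin s) (y : L), y ∈ I j →
        ∀ z : L, z ∈ (⨆ k, ((I k : LieSubmodule 𝕜 L L) : Submodule 𝕜 L)) → ∀ w : L,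
        σ ⁅x, y⁆ ⁅z, w⁆ + σ ⁅y, z⁆ ⁅x, w⁆ + σ ⁅z, x⁆ ⁅y, w⁆ = 0 := by
      intro i x hx j y hy z hz
      refine Submodule.iSup_induction _ (motive := fun z => ∀ w : L,
        σ ⁅x, y⁆ ⁅z, w⁆ + σ ⁅y, z⁆ ⁅x, w⁆ + σ ⁅z, x⁆ ⁅y, w⁆ = 0) hz ?_ ?_ ?_
      · intro k z hzk w; exact stepw i x hx j y hy k z hzk w (hmem w)
      · intro w; simp
      · intro u v hu hv w
        have h1 := hu w; have h2 := hv w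
        simp only [lie_add, add_lie, map_add, LinearMap.add_apply]
        linear_combination h1 + h2
    have stepy : ∀ (i : Fin s) (x : L), x ∈ I i →
        ∀ y : L, y ∈ (⨆ j, ((I j : LieSubmodule 𝕜 L L) : Submodule 𝕜 L)) → ∀ z w : L,
        σ ⁅x, y⁆ ⁅z, w⁆ + σ ⁅y, z⁆ ⁅x, w⁆ + σ ⁅z, x⁆ ⁅y, w⁆ = 0 := by
      intro i x hx y hy
      refine Submodule.iSup_induction _ (motive := fun y => ∀ z w : L,
        σ ⁅x, y⁆ ⁅z, w⁆ + σ ⁅y, z⁆ ⁅x, w⁆ + σ ⁅z, x⁆ ⁅y, w⁆ = 0) hy ?_ ?_ ?_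
      · intro j y hyj z w; exact stepz i x hx j y hyj z (hmem z) w
      · intro z w; simp
      · intro u v hu hv z w
        have h1 := hu z w; have h2 := hv z w
        simp only [lie_add, add_lie, map_add, LinearMap.add_apply]
        linear_combination h1 + h2
    refine Submodule.iSup_induction _ (motive := fun x => ∀ y z w : L,
        σ ⁅x, y⁆ ⁅z, w⁆ + σ ⁅y, z⁆ ⁅x, w⁆ + σ ⁅z, x⁆ ⁅y, w⁆ = 0) (hmem x) ?_ ?_ ?_ y z w
    · intro i x hxi y z w; exact stepy i x hxi y (hmem y) z w
    · intro y z w; simp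
    · intro u v hu hv y z w
      have h1 := hu y z w; have h2 := hv y z w
      simp only [lie_add, add_lie, map_add, LinearMap.add_apply]
      linear_combination h1 + h2
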